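/- For the gain K = P(P + S)⁻¹ with P, S symmetric positive definite, the updated covariance (I − K)P equals S(P + S)⁻¹P, and is symmetric positive definite with trace strictly less than trace(P). -/

import Mathlib

open Matrix

lemma posDef_trace_pos {n : Type*} [Fintype n] [Nonempty n] [DecidableEq n]
    {M : Matrix n n ℝ} (hM : M.PosDef) : 0 < M.trace := by
  have h : ∀ i, 0 < M i i := by
    intro i
    have hne : (Pi.single i 1 : n → ℝ) ≠ 0 := by
      intro h
      have := congrFun h i
      simp at this
    have := hM.dotProduct_mulVec_pos hne
    simpa [dotProduct, mulVec, Pi.single_apply] using this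
  exact Finset.sum_pos (fun i _ => h i) Finset.univ_nonempty

lemma posDef_conj_of_isUnit {n : Type*} [Fintype n] [DecidableEq n]
    {A B : Matrix n n ℝ} (hA : A.PosDef) (hB : IsUnit B) : (Bᴴ * A * B).PosDef := by
  refine PosDef.of_dotProduct_mulVec_pos (isHermitian_conjTranspose_mul_mul B hA.1) fun x hx => ?_
  have hBx : B *ᵥ x ≠ 0 := by
    intro h
    apply hx
    apply Matrix.mulVec_injective_iff_isUnit.mpr hB
    rw [h, mulVec_zero]
  simpa only [star_mulVec, dotProduct_mulVec, vecMul_vecMul] using hA.dotProduct_mulVec_pos hBx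

/-- For `K = P (P + S)⁻¹` with `P`, `S` symmetric positive definite, the updated
covariance `(I − K) P` equals `S (P + S)⁻¹ P`, is symmetric positive definite,
and has trace strictly less than `trace P`. -/
theorem dlf_updated_covariance_properties (N : ℕ) (hN : 0 < N)
    (P S : Matrix (Fin N) (Fin N) ℝ)
    (hP : P.PosDef) (hS : S.PosDef) :
    (1 - P * (P + S)⁻¹) * P = S * (P + S)⁻¹ * P ∧
    ((1 - P * (P + S)⁻¹) * P).PosDef ∧
    ((1 - P * (P + S)⁻¹) * P).trace < P.trace := by
  have : Nonempty (Fin N) := Fin.pos_iff_nonempty.mp hN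
  have hA : (P + S).PosDef := hP.add hS
  have hAd : IsUnit (P + S).det := hA.det_pos.ne'.isUnit
  have hPd : IsUnit P.det := hP.det_pos.ne'.isUnit
  have hSd : IsUnit S.det := hS.det_pos.ne'.isUnit
  have hAinv : (P + S) * (P + S)⁻¹ = 1 := mul_nonsing_inv _ hAd
  have hSA : S * (P + S)⁻¹ = 1 - P * (P + S)⁻¹ := by
    have : ((P + S) - P) * (P + S)⁻¹ = 1 - P * (P + S)⁻¹ := by
      rw [Matrix.sub_mul, hAinv]
    simpa using this
  have eq1 : (1 - P * (P + S)⁻¹) * P = S * (P + S)⁻¹ * P := by rw [hSA]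
  -- the updated covariance equals (S⁻¹ + P⁻¹)⁻¹
  have key : S * (P + S)⁻¹ * P = (S⁻¹ + P⁻¹)⁻¹ := by
    have h1 : S⁻¹ + P⁻¹ = P⁻¹ * (P + S) * S⁻¹ := by
      rw [Matrix.mul_add, nonsing_inv_mul _ hPd, Matrix.add_mul, Matrix.one_mul,
        Matrix.mul_assoc, mul_nonsing_inv _ hSd, Matrix.mul_one, add_comm]
    rw [h1, Matrix.mul_inv_rev, Matrix.mul_inv_rev, nonsing_inv_nonsing_inv _ hPd,
      nonsing_inv_nonsing_inv _ hSd, Matrix.mul_assoc]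
  have hPos : ((1 - P * (P + S)⁻¹) * P).PosDef := by
    rw [eq1, key]
    exact (hS.inv.add hP.inv).inv
  refine ⟨eq1, hPos, ?_⟩
  -- trace part
  have hsub : (1 - P * (P + S)⁻¹) * P = P - P * (P + S)⁻¹ * P := by
    rw [Matrix.sub_mul, Matrix.one_mul]
  have hconj : (P * (P + S)⁻¹ * P).PosDef := by
    have := posDef_conj_of_isUnit hA.inv hP.isUnit
    rwa [hP.isHermitian.eq] at this
  have htr : 0 < (P * (P + S)⁻¹ * P).trace := posDef_trace_pos hconj
  rw [hsub, trace_sub]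
  linarith
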